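/- Let N ≥ 1, let x be a nilpotent N×N complex matrix, and let π₁ ≥ π₂ ≥ ⋯ ≥ π_s ≥ 1 be integers with π₁ + ⋯ + π_s = N. Then the following are equivalent: (i) there exist a chain of subspaces 0 = F₀ ⊆ F₁ ⊆ ⋯ ⊆ F_s = ℂ^N and a permutation τ of {1, …, s} such that dim_ℂ F_j − dim_ℂ F_{j−1} = π_{τ(j)} and x(F_j) ⊆ F_{j−1} for all j = 1, …, s; (ii) for every k ∈ {1, …, s}, dim_ℂ ker(x^k) ≥ π₁ + π₂ + ⋯ + π_k. -/

import Mathlib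

open Matrix Module Submodule

set_option linter.unusedSectionVars false

namespace NilpFlagAux

universe u

variable {V : Type u} [AddCommGroup V] [Module ℂ V] [FiniteDimensional ℂ V]
variable {W : Type u} [AddCommGroup W] [Module ℂ W] [FiniteDimensional ℂ W]

lemma finrank_comap_eq (φ : V →ₗ[ℂ] W) (S : Submodule ℂ W) :
    finrank ℂ (S.comap φ) = finrank ℂ (LinearMap.ker φ) + finrank ℂ ↥(S ⊓ LinearMap.range φ) := by
  have hker : LinearMap.ker φ ≤ S.comap φ := fun v hv => by
    simp only [Submodule.mem_comap, LinearMap.mem_ker.mp hv]; exact S.zero_mem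
  set P := S.comap φ with hP
  have h1 : finrank ℂ (LinearMap.range (φ.comp P.subtype)) +
      finrank ℂ (LinearMap.ker (φ.comp P.subtype)) = finrank ℂ P :=
    LinearMap.finrank_range_add_finrank_ker _
  have h2 : LinearMap.range (φ.comp P.subtype) = S ⊓ LinearMap.range φ := by
    rw [LinearMap.range_comp, Submodule.range_subtype, hP, Submodule.map_comap_eq, inf_comm]
  have h4 : finrank ℂ (LinearMap.ker (φ.comp P.subtype)) = finrank ℂ (LinearMap.ker φ) := by
    rw [LinearMap.ker_comp]
    exact (Submodule.comapSubtypeEquivOfLe hker).finrank_eq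
  rw [h2, h4] at h1
  omega

lemma finrank_comap_subtype (C Y : Submodule ℂ V) :
    finrank ℂ (Y.comap C.subtype) = finrank ℂ ↥(Y ⊓ C) := by
  have : Y.comap C.subtype = (Y ⊓ C).comap C.subtype := by
    ext v; simp [Submodule.mem_comap, v.2]
  rw [this]
  exact (Submodule.comapSubtypeEquivOfLe inf_le_right).finrank_eq

lemma exists_finrank_between (L U : Submodule ℂ V) (h : L ≤ U) (d : ℕ)
    (h1 : finrank ℂ L ≤ d) (h2 : d ≤ finrank ℂ U) :
    ∃ M : Submodule ℂ V, L ≤ M ∧ M ≤ U ∧ finrank ℂ M = d := by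
  induction d, h1 using Nat.le_induction with
  | base => exact ⟨L, le_rfl, h, rfl⟩
  | succ d hd ih =>
    obtain ⟨M, hLM, hMU, hM⟩ := ih (le_of_lt (Nat.lt_of_succ_le h2))
    have hne : M ≠ U := fun he => by rw [he] at hM; omega
    obtain ⟨v, hvU, hvM⟩ := SetLike.exists_of_lt (lt_of_le_of_ne hMU hne)
    refine ⟨M ⊔ ℂ ∙ v, le_trans hLM le_sup_left,
      sup_le hMU ((Submodule.span_singleton_le_iff_mem v U).mpr hvU), ?_⟩
    have hv0 : v ≠ 0 := fun h0 => hvM (h0 ▸ M.zero_mem)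
    have hinf : M ⊓ (ℂ ∙ v) = ⊥ := by
      rw [Submodule.eq_bot_iff]
      rintro y ⟨hyM, hyv⟩
      obtain ⟨c, rfl⟩ := Submodule.mem_span_singleton.mp hyv
      rcases eq_or_ne c 0 with rfl | hc
      · simp
      · exact absurd (by simpa [smul_smul, inv_mul_cancel₀ hc] using M.smul_mem c⁻¹ hyM) hvM
    have := Submodule.finrank_sup_add_finrank_inf_eq M (ℂ ∙ v)
    rw [hinf, finrank_bot, finrank_span_singleton hv0, hM] at this
    omega

/-- The flag property. -/
def HasFlag {s : ℕ} (f : Module.End ℂ V) (a : Fin s → ℕ) : Prop :=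
  ∃ F : Fin (s + 1) → Submodule ℂ V,
    F 0 = ⊥ ∧ F (Fin.last s) = ⊤ ∧
    (∀ j : Fin s, F j.castSucc ≤ F j.succ) ∧
    (∀ j : Fin s, finrank ℂ (F j.succ) = finrank ℂ (F j.castSucc) + a j) ∧
    (∀ j : Fin s, ∀ v ∈ F j.succ, f v ∈ F j.castSucc)

/-- Partial sum of the first `k` entries. -/
def psum {s : ℕ} (π : Fin s → ℕ) (k : ℕ) : ℕ :=
  ∑ j ∈ Finset.univ.filter (fun j : Fin s => (j : ℕ) < k), π j

lemma psum_zero {s : ℕ} (π : Fin s → ℕ) : psum π 0 = 0 := by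
  simp [psum]

lemma psum_succ {s : ℕ} (π : Fin s → ℕ) (k : ℕ) (hk : k < s) :
    psum π (k + 1) = psum π k + π ⟨k, hk⟩ := by
  unfold psum
  have hfil : Finset.univ.filter (fun j : Fin s => (j : ℕ) < k + 1) =
      insert ⟨k, hk⟩ (Finset.univ.filter (fun j : Fin s => (j : ℕ) < k)) := by
    ext j
    simp only [Finset.mem_filter, Finset.mem_univ, true_and, Finset.mem_insert, Fin.ext_iff]
    omega
  rw [hfil, Finset.sum_insert (by simp)]
  ring

lemma psum_all {s : ℕ} (π : Fin s → ℕ) : psum π s = ∑ j, π j := by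
  unfold psum
  congr 1
  ext j
  simp [j.isLt]

lemma psum_shift {n : ℕ} (π : Fin (n + 1) → ℕ) (k : ℕ) :
    psum (π ∘ Fin.succ) k + π 0 = psum π (k + 1) := by
  unfold psum
  rw [Finset.sum_filter, Finset.sum_filter, Fin.sum_univ_succ]
  simp only [Fin.val_zero, Fin.val_succ]
  have : ∀ j : Fin n, (if (j : ℕ) + 1 < k + 1 then π j.succ else 0) =
      (if (j : ℕ) < k then (π ∘ Fin.succ) j else 0) := by
    intro j
    have hiff : (j : ℕ) + 1 < k + 1 ↔ (j : ℕ) < k := by omega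
    simp [hiff, Function.comp]
  simp only [this]
  have h0 : (0 : ℕ) < k + 1 := Nat.succ_pos k
  show (∑ a : Fin n, if (a : ℕ) < k then (π ∘ Fin.succ) a else 0) + π 0 =
    (if 0 < k + 1 then π 0 else 0) + ∑ x : Fin n, if (x : ℕ) < k then (π ∘ Fin.succ) x else 0
  rw [if_pos h0]
  ring

lemma hasFlag_swap {s : ℕ} (f : Module.End ℂ V) (a : Fin s → ℕ) (j jn : Fin s)
    (hjn : (jn : ℕ) = (j : ℕ) + 1) (hasc : a j ≤ a jn) (h : HasFlag f a) :
    HasFlag f (a ∘ Equiv.swap j jn) := by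
  obtain ⟨F, h0, htop, hmn, hdim, hmap⟩ := h
  have hne : j ≠ jn := fun he => by rw [he] at hjn; omega
  have hcast : jn.castSucc = j.succ := by
    apply Fin.ext; simp [hjn]
  set A := F j.castSucc with hA
  set B := F j.succ with hB
  set C := F jn.succ with hC
  have hAB : A ≤ B := hmn j
  have hBC : B ≤ C := by rw [hB, ← hcast]; exact hmn jn
  have hdB : finrank ℂ B = finrank ℂ A + a j := hdim j
  have hdC : finrank ℂ C = finrank ℂ B + a jn := by
    have := hdim jn; rwa [hcast, ← hB, ← hC] at this
  have hfC : ∀ v ∈ C, f v ∈ B := by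
    intro v hv; rw [hB, ← hcast]; exact hmap jn v hv
  have hfB : ∀ v ∈ B, f v ∈ A := hmap j
  set U := C ⊓ Submodule.comap f A with hU
  set L := Submodule.map (f : V →ₗ[ℂ] V) C ⊔ A with hL
  have hLB : L ≤ B := by
    rw [hL]
    apply sup_le _ hAB
    rintro _ ⟨v, hv, rfl⟩
    exact hfC v hv
  have hLU : L ≤ U := by
    rw [hL, hU]
    apply sup_le
    · apply le_inf
      · rintro _ ⟨v, hv, rfl⟩
        exact hBC (hfC v hv)
      · rintro _ ⟨v, hv, rfl⟩
        exact hfB _ (hfC v hv)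
    · exact le_inf (le_trans hAB hBC) (fun v hv => hfB v (hAB hv))
  -- dimension of U
  have hdU : finrank ℂ A + a jn ≤ finrank ℂ U := by
    -- consider χ : C → V ⧸ A
    set χ : ↥C →ₗ[ℂ] V ⧸ A := (A.mkQ.comp (f : V →ₗ[ℂ] V)).comp C.subtype with hχ
    have hrn : finrank ℂ (LinearMap.range χ) + finrank ℂ (LinearMap.ker χ) = finrank ℂ C :=
      LinearMap.finrank_range_add_finrank_ker χ
    have hkerχ : finrank ℂ (LinearMap.ker χ) = finrank ℂ U := by
      have : LinearMap.ker χ = (Submodule.comap (f : V →ₗ[ℂ] V) A).comap C.subtype := by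
        rw [hχ, LinearMap.ker_comp, LinearMap.ker_comp, Submodule.ker_mkQ]
      rw [this, finrank_comap_subtype, inf_comm, hU]
    have hranχ : finrank ℂ (LinearMap.range χ) ≤ a j := by
      have hle : LinearMap.range χ ≤ Submodule.map A.mkQ B := by
        rintro _ ⟨v, rfl⟩
        exact ⟨f v.1, hfC v.1 v.2, rfl⟩
      have : finrank ℂ (Submodule.map A.mkQ B) + finrank ℂ A = finrank ℂ B := by
        have hc : (Submodule.map A.mkQ B).comap A.mkQ = B := by
          rw [Submodule.comap_map_eq, Submodule.ker_mkQ, sup_eq_left.mpr hAB]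
        have := finrank_comap_eq (A.mkQ) (Submodule.map A.mkQ B)
        rw [hc, Submodule.ker_mkQ, Submodule.range_mkQ, inf_top_eq] at this
        omega
      have := Submodule.finrank_mono hle
      omega
    omega
  obtain ⟨M, hLM, hMU, hdM⟩ := exists_finrank_between L U hLU (finrank ℂ A + a jn)
    (le_trans (Submodule.finrank_mono hLB) (by omega)) hdU
  -- the new flag
  set F' := Function.update F j.succ M with hF'
  have upd_ne : ∀ p : Fin (s+1), p ≠ j.succ → F' p = F p :=
    fun p hp => Function.update_of_ne hp _ _
  have upd_self : F' j.succ = M := Function.update_self _ _ _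
  have neCastJ : j.castSucc ≠ j.succ := by
    intro hh
    have := congrArg Fin.val hh
    simp only [Fin.coe_castSucc, Fin.val_succ] at this
    omega
  have neSuccJn : jn.succ ≠ j.succ := by
    intro hh
    have := congrArg Fin.val hh
    simp only [Fin.val_succ, hjn] at this
    omega
  have hgen : ∀ i : Fin s, i ≠ j → i ≠ jn →
      F' i.succ = F i.succ ∧ F' i.castSucc = F i.castSucc := by
    intro i hij hijn
    constructor
    · exact upd_ne _ (fun hh => hij (Fin.succ_injective _ hh))
    · refine upd_ne _ (fun hh => hijn (Fin.ext ?_))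
      have := congrArg Fin.val hh
      simp only [Fin.coe_castSucc, Fin.val_succ] at this
      omega
  refine ⟨F', ?_, ?_, ?_, ?_, ?_⟩
  · rw [upd_ne _ (Ne.symm (Fin.succ_ne_zero j)), h0]
  · have hl : Fin.last s ≠ j.succ := by
      have hlt := jn.isLt
      intro hh
      have := congrArg Fin.val hh
      simp only [Fin.val_last, Fin.val_succ] at this
      omega
    rw [upd_ne _ hl, htop]
  · intro i
    rcases eq_or_ne i j with rfl | hij
    · rw [upd_ne _ neCastJ, upd_self]
      exact le_trans le_sup_right hLM
    · rcases eq_or_ne i jn with rfl | hijn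
      · rw [hcast, upd_self, upd_ne _ neSuccJn]
        exact le_trans hMU inf_le_left
      · rw [(hgen i hij hijn).1, (hgen i hij hijn).2]
        exact hmn i
  · intro i
    rcases eq_or_ne i j with rfl | hij
    · rw [upd_ne _ neCastJ, upd_self]
      simp only [Function.comp_apply, Equiv.swap_apply_left]
      exact hdM
    · rcases eq_or_ne i jn with rfl | hijn
      · rw [hcast, upd_self, upd_ne _ neSuccJn]
        simp only [Function.comp_apply, Equiv.swap_apply_right]
        rw [← hC, hdC, hdB, hdM]
        ring
      · rw [(hgen i hij hijn).1, (hgen i hij hijn).2]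
        simp only [Function.comp_apply, Equiv.swap_apply_of_ne_of_ne hij hijn]
        exact hdim i
  · intro i
    rcases eq_or_ne i j with rfl | hij
    · rw [upd_ne _ neCastJ, upd_self]
      intro v hv
      exact (le_trans hMU inf_le_right) hv
    · rcases eq_or_ne i jn with rfl | hijn
      · rw [hcast, upd_self, upd_ne _ neSuccJn]
        intro v hv
        exact hLM (le_sup_left (α := Submodule ℂ V) ⟨v, hv, rfl⟩)
      · rw [(hgen i hij hijn).1, (hgen i hij hijn).2]
        exact hmap i

lemma antitone_of_adjacent {s : ℕ} (g : Fin s → ℕ)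
    (h : ∀ (j jn : Fin s), (jn : ℕ) = (j : ℕ) + 1 → g jn ≤ g j) : Antitone g := by
  have key : ∀ d : ℕ, ∀ i k : Fin s, (k : ℕ) = (i : ℕ) + d → g k ≤ g i := by
    intro d
    induction d with
    | zero =>
      intro i k hk
      have : k = i := Fin.ext (by omega)
      rw [this]
    | succ d ih =>
      intro i k hk
      have hm : (i : ℕ) + d < s := by have := k.isLt; omega
      have h1 : g k ≤ g ⟨(i : ℕ) + d, hm⟩ := h _ k (by simp only [Fin.val_mk, hk]; omega)
      exact le_trans h1 (ih i _ rfl)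
  intro i k hik
  exact key ((k : ℕ) - (i : ℕ)) i k (by omega)

lemma hasFlag_sort {s : ℕ} (f : Module.End ℂ V) (π : Fin s → ℕ) :
    ∀ (n : ℕ) (τ : Equiv.Perm (Fin s)), (∑ i : Fin s, (i : ℕ) * π (τ i)) = n →
    HasFlag f (π ∘ ⇑τ) →
    ∃ τ' : Equiv.Perm (Fin s), Antitone (π ∘ ⇑τ') ∧ HasFlag f (π ∘ ⇑τ') := by
  intro n
  induction n using Nat.strong_induction_on with
  | _ n ih =>
  intro τ hpot hflag
  by_cases hA : Antitone (π ∘ ⇑τ)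
  · exact ⟨τ, hA, hflag⟩
  · have : ¬ ∀ (j jn : Fin s), (jn : ℕ) = (j : ℕ) + 1 → (π ∘ ⇑τ) jn ≤ (π ∘ ⇑τ) j :=
      fun hh => hA (antitone_of_adjacent _ hh)
    push_neg at this
    obtain ⟨j, jn, hjn, hlt⟩ := this
    have hne : j ≠ jn := fun he => by rw [he] at hjn; omega
    have hflag' : HasFlag f ((π ∘ ⇑τ) ∘ ⇑(Equiv.swap j jn)) :=
      hasFlag_swap f (π ∘ ⇑τ) j jn hjn (le_of_lt hlt) hflag
    set τ'' : Equiv.Perm (Fin s) := (Equiv.swap j jn).trans τ with hτ''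
    have hcomp : (π ∘ ⇑τ) ∘ ⇑(Equiv.swap j jn) = π ∘ ⇑τ'' := by
      funext i; simp [hτ'', Function.comp]
    rw [hcomp] at hflag'
    -- potential decreases
    set m := ∑ i : Fin s, (i : ℕ) * π (τ'' i) with hm
    have hsplit : ∀ h : Fin s → ℕ, ∑ i, h i = (∑ i ∈ Finset.univ \ {j, jn}, h i) + (h j + h jn) := by
      intro h
      rw [← Finset.sum_sdiff (Finset.subset_univ {j, jn})]
      congr 1
      rw [Finset.sum_pair hne]
    have hmn : m < n := by
      rw [hm, ← hpot]
      rw [hsplit (fun i => (i : ℕ) * π (τ'' i)), hsplit (fun i => (i : ℕ) * π (τ i))]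
      have hsame : ∑ i ∈ Finset.univ \ {j, jn}, (i : ℕ) * π (τ'' i) =
          ∑ i ∈ Finset.univ \ {j, jn}, (i : ℕ) * π (τ i) := by
        apply Finset.sum_congr rfl
        intro i hi
        simp only [Finset.mem_sdiff, Finset.mem_insert, Finset.mem_singleton] at hi
        push_neg at hi
        rw [hτ'']
        simp [Equiv.swap_apply_of_ne_of_ne hi.2.1 hi.2.2]
      rw [hsame]
      apply Nat.add_lt_add_left
      have e1 : τ'' j = τ jn := by simp [hτ'']
      have e2 : τ'' jn = τ j := by simp [hτ'']
      rw [e1, e2]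
      simp only [Function.comp_apply] at hlt
      have hj1 : ((jn : ℕ)) * π (τ j) = (j : ℕ) * π (τ j) + π (τ j) := by rw [hjn]; ring
      have hj2 : ((jn : ℕ)) * π (τ jn) = (j : ℕ) * π (τ jn) + π (τ jn) := by rw [hjn]; ring
      omega
    exact ih m hmn τ'' rfl hflag'

lemma pointwise_le {s : ℕ} (π : Fin s → ℕ) (hm : Antitone π) (τ : Equiv.Perm (Fin s))
    (hτ : Antitone (π ∘ ⇑τ)) : ∀ i, π i ≤ π (τ i) := by
  intro i
  by_contra hcon
  push_neg at hcon
  have himg : (Finset.Ici i).image τ ⊆ (Finset.Ici i).erase i := by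
    intro y hy
    obtain ⟨l, hl, rfl⟩ := Finset.mem_image.mp hy
    rw [Finset.mem_Ici] at hl
    have h1 : π (τ l) ≤ π (τ i) := hτ hl
    have h2 : π (τ l) < π i := lt_of_le_of_lt h1 hcon
    have h3 : i < τ l := by
      by_contra hc
      push_neg at hc
      exact absurd (hm hc) (by omega)
    rw [Finset.mem_erase, Finset.mem_Ici]
    exact ⟨Fin.ne_of_gt h3, le_of_lt h3⟩
  have hcard := Finset.card_le_card himg
  rw [Finset.card_image_of_injective _ τ.injective,
    Finset.card_erase_of_mem (Finset.mem_Ici.mpr le_rfl)] at hcard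
  have hpos : 0 < (Finset.Ici i).card :=
    Finset.card_pos.mpr ⟨i, Finset.mem_Ici.mpr le_rfl⟩
  omega

lemma forward {s : ℕ} (f : Module.End ℂ V) (π : Fin s → ℕ) (hm : Antitone π)
    (τ : Equiv.Perm (Fin s)) (h : HasFlag f (π ∘ ⇑τ)) :
    ∀ k : ℕ, k ≤ s → psum π k ≤ finrank ℂ (LinearMap.ker (f ^ k)) := by
  obtain ⟨τ', hanti, F, h0, htop, hmn, hdim, hmap⟩ :=
    hasFlag_sort f π _ τ rfl h
  have hpt : ∀ i, π i ≤ π (τ' i) := pointwise_le π hm τ' hanti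
  -- flag is inside kernels
  have hker : ∀ i : Fin (s + 1), F i ≤ LinearMap.ker (f ^ (i : ℕ)) := by
    intro i
    induction i using Fin.induction with
    | zero => rw [h0]; exact bot_le
    | succ i ihi =>
      intro v hv
      rw [LinearMap.mem_ker]
      have h1 : f v ∈ F i.castSucc := hmap i v hv
      have h2 : (f ^ (i : ℕ)) (f v) = 0 := LinearMap.mem_ker.mp (ihi h1)
      have : (f ^ ((i : ℕ) + 1)) v = (f ^ (i : ℕ)) (f v) := by
        rw [pow_succ]
        rfl
      rw [Fin.val_succ, this, h2]
  -- dimension of flag pieces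
  have hdims : ∀ k : ℕ, ∀ hk : k ≤ s, finrank ℂ (F ⟨k, Nat.lt_succ_of_le hk⟩) =
      ∑ i ∈ Finset.univ.filter (fun i : Fin s => (i : ℕ) < k), π (τ' i) := by
    intro k
    induction k with
    | zero =>
      intro hk
      have : (⟨0, Nat.lt_succ_of_le hk⟩ : Fin (s + 1)) = 0 := rfl
      rw [this, h0]
      simp [finrank_bot]
    | succ k ihk =>
      intro hk
      have hks : k < s := hk
      have e1 : (⟨k + 1, Nat.lt_succ_of_le hk⟩ : Fin (s + 1)) = (⟨k, hks⟩ : Fin s).succ := rfl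
      have e2 : (⟨k, Nat.lt_succ_of_le (le_of_lt hks)⟩ : Fin (s + 1)) = (⟨k, hks⟩ : Fin s).castSucc := rfl
      rw [e1, hdim ⟨k, hks⟩, ← e2, ihk (le_of_lt hks)]
      have hfil : Finset.univ.filter (fun i : Fin s => (i : ℕ) < k + 1) =
          insert ⟨k, hks⟩ (Finset.univ.filter (fun i : Fin s => (i : ℕ) < k)) := by
        ext i
        simp only [Finset.mem_filter, Finset.mem_univ, true_and, Finset.mem_insert, Fin.ext_iff]
        omega
      rw [hfil, Finset.sum_insert (by simp)]
      simp only [Function.comp_apply]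
      ring
  intro k hk
  calc psum π k ≤ ∑ i ∈ Finset.univ.filter (fun i : Fin s => (i : ℕ) < k), π (τ' i) :=
        Finset.sum_le_sum (fun i _ => hpt i)
    _ = finrank ℂ (F ⟨k, Nat.lt_succ_of_le hk⟩) := (hdims k hk).symm
    _ ≤ finrank ℂ (LinearMap.ker (f ^ k)) := by
        have := hker ⟨k, Nat.lt_succ_of_le hk⟩
        exact Submodule.finrank_mono this

lemma backward : ∀ (s : ℕ) {V : Type u} [AddCommGroup V] [Module ℂ V]
    [FiniteDimensional ℂ V] (f : Module.End ℂ V) (π : Fin s → ℕ), Antitone π →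
    (∑ j, π j = finrank ℂ V) →
    (∀ k : ℕ, 1 ≤ k → k ≤ s → psum π k ≤ finrank ℂ (LinearMap.ker (f ^ k))) →
    ∃ τ : Equiv.Perm (Fin s), HasFlag f (π ∘ ⇑τ) := by
  intro s
  induction s with
  | zero =>
    intro V iAG iMod iFD f π hm hsum hker
    refine ⟨1, fun _ => ⊥, rfl, ?_, fun j => j.elim0, fun j => j.elim0, fun j => j.elim0⟩
    have hV : finrank ℂ V = 0 := by rw [← hsum]; simp
    have hsub : Subsingleton V := by
      rw [← Module.finrank_zero_iff (R := ℂ)]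
      exact hV
    rw [eq_top_iff]
    intro v _
    rw [Submodule.mem_bot]
    exact Subsingleton.elim v 0
  | succ n ih =>
    intro V iAG iMod iFD f π hm hsum hker
    set d := π 0 with hd
    have hdker : d ≤ finrank ℂ (LinearMap.ker f) := by
      have h1 := hker 1 le_rfl (by omega)
      rw [psum_succ π 0 (Nat.succ_pos n), psum_zero, pow_one] at h1
      simpa using h1
    have htopker : LinearMap.ker (f ^ (n + 1)) = ⊤ := by
      have h1 := hker (n + 1) (by omega) le_rfl
      rw [psum_all, hsum] at h1
      exact Submodule.eq_top_of_finrank_eq (le_antisymm (Submodule.finrank_le _) h1)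
    have hfn1 : (f ^ (n + 1) : Module.End ℂ V) = 0 := LinearMap.ker_eq_top.mp htopker
    set Wc : ℕ → Submodule ℂ V := fun k => LinearMap.ker f ⊓ LinearMap.range (f ^ k)
      with hWc
    have hWanti : ∀ k l : ℕ, k ≤ l → Wc l ≤ Wc k := by
      intro k l hkl
      apply inf_le_inf_left
      obtain ⟨m, rfl⟩ := Nat.exists_eq_add_of_le hkl
      rw [pow_add, Module.End.mul_eq_comp]
      exact LinearMap.range_comp_le_range _ _
    have hWlast : finrank ℂ (Wc (n + 1)) ≤ d := by
      have hb : Wc (n + 1) = ⊥ := by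
        rw [hWc]
        simp [hfn1]
      rw [hb, finrank_bot]
      exact Nat.zero_le _
    have hex : ∃ k, finrank ℂ (Wc k) ≤ d := ⟨n + 1, hWlast⟩
    set k₁ := Nat.find hex with hk₁
    have hQk : finrank ℂ (Wc k₁) ≤ d := Nat.find_spec hex
    obtain ⟨F₁, hF₁ker, hF₁d, hF₁cap⟩ :
        ∃ F₁ : Submodule ℂ V, F₁ ≤ LinearMap.ker f ∧ finrank ℂ F₁ = d ∧
          ∀ k : ℕ, min d (finrank ℂ (Wc k)) ≤
            finrank ℂ ↥(F₁ ⊓ LinearMap.range (f ^ k)) := by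
      rcases Nat.eq_zero_or_pos k₁ with h0 | hpos
      · have hW0 : Wc 0 = LinearMap.ker f := by
          rw [hWc]
          simp only [pow_zero]
          have hr : LinearMap.range (1 : Module.End ℂ V) = ⊤ :=
            LinearMap.range_eq_top.mpr (fun v => ⟨v, rfl⟩)
          rw [hr, inf_top_eq]
        refine ⟨LinearMap.ker f, le_rfl, ?_, ?_⟩
        · have h1 := hQk
          rw [h0, hW0] at h1
          exact le_antisymm h1 hdker
        · intro k
          have h2 : LinearMap.ker f ⊓ LinearMap.range (f ^ k) = Wc k := by rw [hWc]
          rw [h2]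
          exact min_le_right _ _
      · obtain ⟨m, hm1⟩ := Nat.exists_eq_succ_of_ne_zero (Nat.pos_iff_ne_zero.mp hpos)
        have hnm : d < finrank ℂ (Wc m) := by
          have := Nat.find_min hex (show m < k₁ by omega)
          omega
        have hkk : finrank ℂ (Wc k₁) ≤ d := hQk
        obtain ⟨M, hM1, hM2, hM3⟩ := exists_finrank_between (Wc k₁) (Wc m)
          (hWanti m k₁ (by omega)) d (by omega) (le_of_lt hnm)
        refine ⟨M, le_trans hM2 inf_le_left, hM3, ?_⟩
        intro k
        rcases le_or_gt k m with hkm | hkm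
        · have hMr : M ≤ LinearMap.range (f ^ k) :=
            le_trans hM2 (le_trans (hWanti k m hkm) inf_le_right)
          have h3 : M ⊓ LinearMap.range (f ^ k) = M := inf_eq_left.mpr hMr
          rw [h3, hM3]
          exact min_le_left _ _
        · have hWk : Wc k ≤ M ⊓ LinearMap.range (f ^ k) :=
            le_inf (le_trans (hWanti k₁ k (by omega)) hM1) inf_le_right
          exact le_trans (min_le_right _ _) (Submodule.finrank_mono hWk)
    -- quotient
    have hcomap : F₁ ≤ Submodule.comap (f : V →ₗ[ℂ] V) F₁ := by
      intro v hv
      rw [Submodule.mem_comap]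
      have h1 : f v = 0 := LinearMap.mem_ker.mp (hF₁ker hv)
      rw [h1]
      exact F₁.zero_mem
    set g : Module.End ℂ (V ⧸ F₁) := Submodule.mapQ F₁ F₁ (f : V →ₗ[ℂ] V) hcomap with hg
    have hgmk : ∀ v : V, g (F₁.mkQ v) = F₁.mkQ (f v) := by
      intro v
      rw [hg, Submodule.mkQ_apply, Submodule.mapQ_apply, Submodule.mkQ_apply]
    have hgk : ∀ (k : ℕ) (v : V), (g ^ k) (F₁.mkQ v) = F₁.mkQ ((f ^ k) v) := by
      intro k
      induction k with
      | zero => intro v; simp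
      | succ k ihk =>
        intro v
        rw [pow_succ, Module.End.mul_apply, hgmk v, ihk (f v), ← Module.End.mul_apply,
          ← pow_succ]
    have hPk : ∀ k : ℕ, Submodule.comap F₁.mkQ (LinearMap.ker (g ^ k)) =
        Submodule.comap (f ^ k : Module.End ℂ V) F₁ := by
      intro k
      ext v
      simp only [Submodule.mem_comap, LinearMap.mem_ker, hgk k v]
      rw [Submodule.mkQ_apply, Submodule.Quotient.mk_eq_zero]
    have hkerg : ∀ k : ℕ, finrank ℂ (LinearMap.ker (g ^ k)) + d =
        finrank ℂ (LinearMap.ker (f ^ k)) +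
          finrank ℂ ↥(F₁ ⊓ LinearMap.range (f ^ k)) := by
      intro k
      have h1 := finrank_comap_eq F₁.mkQ (LinearMap.ker (g ^ k))
      rw [hPk k, Submodule.ker_mkQ, Submodule.range_mkQ, inf_top_eq] at h1
      have h2 := finrank_comap_eq (f ^ k : Module.End ℂ V) F₁
      rw [h2] at h1
      omega
    have hstep : ∀ k : ℕ, finrank ℂ (LinearMap.ker (f ^ (k + 1))) ≤
        finrank ℂ (LinearMap.ker (f ^ k)) + finrank ℂ (Wc k) := by
      intro k
      set K1 := LinearMap.ker (f ^ (k + 1) : Module.End ℂ V) with hK1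
      set ψ : ↥K1 →ₗ[ℂ] V := ((f ^ k : Module.End ℂ V) : V →ₗ[ℂ] V).comp K1.subtype
        with hψ
      have hrn : finrank ℂ (LinearMap.range ψ) + finrank ℂ (LinearMap.ker ψ) =
          finrank ℂ K1 := LinearMap.finrank_range_add_finrank_ker ψ
      have hkle : LinearMap.ker (f ^ k : Module.End ℂ V) ≤ K1 := by
        intro v hv
        rw [LinearMap.mem_ker] at hv
        rw [hK1, LinearMap.mem_ker, pow_succ', Module.End.mul_apply, hv, map_zero]
      have hkψ : finrank ℂ (LinearMap.ker ψ) =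
          finrank ℂ (LinearMap.ker (f ^ k : Module.End ℂ V)) := by
        rw [hψ, LinearMap.ker_comp, finrank_comap_subtype]
        have he : LinearMap.ker (f ^ k : Module.End ℂ V) ⊓ K1 =
            LinearMap.ker (f ^ k : Module.End ℂ V) := inf_eq_left.mpr hkle
        rw [he]
      have hrψ : LinearMap.range ψ ≤ Wc k := by
        rintro w hw
        obtain ⟨v, rfl⟩ := hw
        have hv1 : (f ^ (k + 1)) v.1 = 0 := LinearMap.mem_ker.mp v.2
        have hfv : f (ψ v) = (f ^ (k + 1)) v.1 := by
          rw [hψ]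
          simp only [LinearMap.coe_comp, Function.comp_apply, Submodule.coe_subtype]
          rw [← Module.End.mul_apply, ← pow_succ']
        rw [hWc]
        refine Submodule.mem_inf.mpr ⟨?_, ⟨v.1, rfl⟩⟩
        rw [LinearMap.mem_ker, hfv, hv1]
      have h4 := Submodule.finrank_mono hrψ
      omega
    have hkerg' : ∀ k : ℕ, 1 ≤ k → k ≤ n →
        psum (π ∘ Fin.succ) k ≤ finrank ℂ (LinearMap.ker (g ^ k)) := by
      intro k hk1 hkn
      have hs := psum_shift π k
      have h1 := hker k hk1 (by omega)
      have h2 := hker (k + 1) (by omega) (by omega)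
      have h3 := hkerg k
      have h4 := hF₁cap k
      have h5 := psum_succ π k (by omega)
      have h6 : π ⟨k, by omega⟩ ≤ d := hm (Fin.zero_le _)
      rcases le_or_gt d (finrank ℂ (Wc k)) with hc | hc
      · rw [min_eq_left hc] at h4
        omega
      · rw [min_eq_right (le_of_lt hc)] at h4
        have h7 := hstep k
        omega
    have hm' : Antitone (π ∘ Fin.succ) := by
      intro i j hij
      exact hm (Fin.succ_le_succ_iff.mpr hij)
    have hsum' : ∑ j, (π ∘ Fin.succ) j = finrank ℂ (V ⧸ F₁) := by
      have hq := Submodule.finrank_quotient_add_finrank F₁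
      have hs := Fin.sum_univ_succ π
      rw [hsum] at hs
      simp only [Function.comp_apply]
      omega
    obtain ⟨τ', G, hG0, hGtop, hGmono, hGdim, hGmap⟩ := ih g (π ∘ Fin.succ) hm' hsum' hkerg'
    refine ⟨Equiv.Perm.decomposeFin.symm (0, τ'),
      fun i => Fin.cases ⊥ (fun p => (G p).comap F₁.mkQ) i, ?_, ?_, ?_, ?_, ?_⟩
    · simp
    · rw [← Fin.succ_last]
      simp only [Fin.cases_succ]
      rw [hGtop, Submodule.comap_top]
    · intro j
      rcases Fin.eq_zero_or_eq_succ j with rfl | ⟨i', rfl⟩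
      · simp only [Fin.castSucc_zero, Fin.cases_zero]
        exact bot_le
      · rw [← Fin.succ_castSucc]
        simp only [Fin.cases_succ]
        exact Submodule.comap_mono (hGmono i')
    · have hcr : ∀ S : Submodule ℂ (V ⧸ F₁),
          finrank ℂ (S.comap F₁.mkQ) = d + finrank ℂ S := by
        intro S
        have h1 := finrank_comap_eq F₁.mkQ S
        rwa [Submodule.ker_mkQ, Submodule.range_mkQ, inf_top_eq, hF₁d] at h1
      intro j
      rcases Fin.eq_zero_or_eq_succ j with rfl | ⟨i', rfl⟩
      · simp only [Fin.castSucc_zero, Fin.cases_zero, Fin.cases_succ, finrank_bot,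
          Function.comp_apply, Equiv.Perm.decomposeFin_symm_apply_zero]
        show finrank ℂ ↥((G 0).comap F₁.mkQ) = finrank ℂ ↥(⊥ : Submodule ℂ V) + π 0
        rw [hG0, Submodule.comap_bot, Submodule.ker_mkQ, hF₁d, hd, finrank_bot]
        omega
      · rw [← Fin.succ_castSucc]
        simp only [Fin.cases_succ, Function.comp_apply,
          Equiv.Perm.decomposeFin_symm_apply_succ, Equiv.swap_self]
        show finrank ℂ ↥((G i'.succ).comap F₁.mkQ) = finrank ℂ ↥((G i'.castSucc).comap F₁.mkQ) + π ((Equiv.refl (Fin (n + 1))) (τ' i').succ)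
        rw [hcr, hcr, hGdim i']
        simp only [Function.comp_apply, Equiv.refl_apply]
        ring
    · intro j
      rcases Fin.eq_zero_or_eq_succ j with rfl | ⟨i', rfl⟩
      · intro v hv
        simp only [Fin.cases_succ, Submodule.mem_comap, hG0] at hv
        simp only [Fin.castSucc_zero, Fin.cases_zero, Submodule.mem_bot]
        have hvF : v ∈ F₁ := by
          rw [Submodule.mem_bot] at hv
          exact (Submodule.Quotient.mk_eq_zero F₁).mp hv
        exact LinearMap.mem_ker.mp (hF₁ker hvF)
      · intro v hv
        rw [← Fin.succ_castSucc]
        simp only [Fin.cases_succ, Submodule.mem_comap] at hv ⊢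
        rw [← hgmk v]
        exact hGmap i' _ hv

end NilpFlagAux

open NilpFlagAux in
/-- For a nilpotent N×N complex matrix x and a decreasing tuple of positive
integers π summing to N, x preserves a flag whose dimension jumps are the
parts of π in some order and acts as zero on successive quotients, if and
only if dim ker(x^k) ≥ π₁ + ⋯ + π_k for every k ∈ {1, …, s}. -/
theorem nilpotent_flag_iff_kernel_dims (N s : ℕ) (hN : 1 ≤ N)
    (x : Matrix (Fin N) (Fin N) ℂ) (hx : IsNilpotent x)
    (π : Fin s → ℕ) (hpos : ∀ j, 1 ≤ π j)
    (hmono : ∀ i j : Fin s, i ≤ j → π j ≤ π i)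
    (hsum : ∑ j, π j = N) :
    (∃ F : Fin (s + 1) → Submodule ℂ (Fin N → ℂ), ∃ τ : Equiv.Perm (Fin s),
        F 0 = ⊥ ∧ F (Fin.last s) = ⊤ ∧
        (∀ j : Fin s, F j.castSucc ≤ F j.succ) ∧
        (∀ j : Fin s, Module.finrank ℂ (F j.succ) =
          Module.finrank ℂ (F j.castSucc) + π (τ j)) ∧
        (∀ j : Fin s, ∀ v ∈ F j.succ, x.mulVec v ∈ F j.castSucc)) ↔
      (∀ k : ℕ, 1 ≤ k → k ≤ s →
        ∑ j ∈ Finset.univ.filter (fun j : Fin s => (j : ℕ) < k), π j ≤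
          Module.finrank ℂ (LinearMap.ker (Matrix.mulVecLin (x ^ k)))) := by
  classical
  set f : Module.End ℂ (Fin N → ℂ) := Matrix.mulVecLin x with hf
  have hpow : ∀ k : ℕ, Matrix.mulVecLin (x ^ k) = (f ^ k : Module.End ℂ (Fin N → ℂ)) := by
    intro k
    induction k with
    | zero =>
      rw [pow_zero, pow_zero, Matrix.mulVecLin_one]
      rfl
    | succ k ihk =>
      rw [pow_succ, pow_succ, Matrix.mulVecLin_mul, ihk, Module.End.mul_eq_comp]
  have hanti : Antitone π := fun i j hij => hmono i j hij
  constructor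
  · rintro ⟨F, τ, h0, htop, hmn, hdim, hmap⟩ k hk1 hks
    have hflag : HasFlag f (π ∘ ⇑τ) := by
      refine ⟨F, h0, htop, hmn, fun j => hdim j, fun j v hv => ?_⟩
      have h1 := hmap j v hv
      rwa [← Matrix.mulVecLin_apply, ← hf] at h1
    have hres := forward f π hanti τ hflag k hks
    rw [hpow k]
    exact hres
  · intro hk
    obtain ⟨τ, F, h0, htop, hmn, hdim, hmap⟩ := backward s f π hanti
      (by rw [hsum]; exact (Module.finrank_fin_fun ℂ).symm)
      (fun k hk1 hks => by
        have h1 := hk k hk1 hks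
        rwa [hpow k] at h1)
    refine ⟨F, τ, h0, htop, hmn, fun j => hdim j, fun j v hv => ?_⟩
    have h1 := hmap j v hv
    rwa [hf, Matrix.mulVecLin_apply] at h1
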